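/- Let G be a Hamiltonian graph with Hamilton cycle H and auxiliary graph A = A(G, H). If S ⊆ A is a union of vertex-disjoint colour-alternating cycles containing no two neighbouring vertices, then the subgraph F(S) ⊆ G is a 2-factor of G. -/

import Mathlib

/-- Red part of the auxiliary graph `A(G,H)` (vertices indexed by `ZMod n`, vertex
`i` standing for the Hamilton-cycle edge `e_i = v_i v_{i+1}`): a red edge `e_i e_j`
iff `v_{i+1} v_{j+1}` is an inner edge of `G`. -/
def auxRed (n : ℕ) (G : SimpleGraph (ZMod n)) : SimpleGraph (ZMod n) where
  Adj i j := G.Adj (i + 1) (j + 1) ∧ j ≠ i + 1 ∧ i ≠ j + 1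
  symm := ⟨fun i j h => ⟨h.1.symm, h.2.2, h.2.1⟩⟩
  loopless := ⟨fun i h => G.irrefl h.1⟩

/-- Blue part of `A(G,H)`: a blue edge `e_i e_j` iff `v_i v_j` is an inner edge. -/
def auxBlue (n : ℕ) (G : SimpleGraph (ZMod n)) : SimpleGraph (ZMod n) where
  Adj i j := G.Adj i j ∧ j ≠ i + 1 ∧ i ≠ j + 1
  symm := ⟨fun i j h => ⟨h.1.symm, h.2.2, h.2.1⟩⟩
  loopless := ⟨fun i h => G.irrefl h.1⟩

/-- Given a union `S` of vertex-disjoint colour-alternating cycles in `A(G,H)`,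
recorded by its vertex set `T` and by the red/blue partner functions `r`, `b`
(each vertex of `S` lies on exactly one red and one blue edge of `S`), the
corresponding spanning subgraph `F(S)` of `G`: its edges are the Hamilton-cycle
edges `v_x v_{x+1}` with `e_x ∉ V(S)`, the inner edges `v_{i+1} v_{r(i)+1}` coming
from red edges of `S`, and the inner edges `v_i v_{b(i)}` coming from blue edges of
`S`. -/
def FSgraph (n : ℕ) (T : Finset (ZMod n)) (r b : ZMod n → ZMod n) :
    SimpleGraph (ZMod n) :=
  SimpleGraph.fromRel (fun x y =>
    (y = x + 1 ∧ x ∉ T) ∨ (x - 1 ∈ T ∧ y = r (x - 1) + 1) ∨ (x ∈ T ∧ y = b x))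

lemma auxRed_adj {n : ℕ} {G : SimpleGraph (ZMod n)} {i j : ZMod n} :
    (auxRed n G).Adj i j ↔ G.Adj (i + 1) (j + 1) ∧ j ≠ i + 1 ∧ i ≠ j + 1 := Iff.rfl

lemma auxBlue_adj {n : ℕ} {G : SimpleGraph (ZMod n)} {i j : ZMod n} :
    (auxBlue n G).Adj i j ↔ G.Adj i j ∧ j ≠ i + 1 ∧ i ≠ j + 1 := Iff.rfl

lemma FSgraph_adj {n : ℕ} {T : Finset (ZMod n)} {r b : ZMod n → ZMod n} {x y : ZMod n} :
    (FSgraph n T r b).Adj x y ↔ x ≠ y ∧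
      (((y = x + 1 ∧ x ∉ T) ∨ (x - 1 ∈ T ∧ y = r (x - 1) + 1) ∨ (x ∈ T ∧ y = b x)) ∨
       ((x = y + 1 ∧ y ∉ T) ∨ (y - 1 ∈ T ∧ x = r (y - 1) + 1) ∨ (y ∈ T ∧ x = b y))) := by
  rw [FSgraph, SimpleGraph.fromRel_adj]

/-- If `S ⊆ A(G,H)` is a union of vertex-disjoint colour-alternating cycles with no
two neighbouring vertices, then `F(S)` is a 2-factor of `G`: a spanning subgraph of
`G` in which every vertex has degree exactly `2`. -/
theorem stmt_7 (n : ℕ) [NeZero n] (hn : 3 ≤ n) (G : SimpleGraph (ZMod n))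
    (hH : ∀ i : ZMod n, G.Adj i (i + 1))
    (T : Finset (ZMod n)) (r b : ZMod n → ZMod n)
    (hr : ∀ i ∈ T, r i ∈ T ∧ r (r i) = i ∧ (auxRed n G).Adj i (r i))
    (hb : ∀ i ∈ T, b i ∈ T ∧ b (b i) = i ∧ (auxBlue n G).Adj i (b i))
    (hnb : ∀ i ∈ T, i + 1 ∉ T) :
    (∀ x y, (FSgraph n T r b).Adj x y → G.Adj x y) ∧
    (∀ x : ZMod n, {y | (FSgraph n T r b).Adj x y}.ncard = 2) := by
  have h1 : (1 : ZMod n) ≠ 0 := by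
    intro h
    have hd : n ∣ 1 := (ZMod.natCast_eq_zero_iff 1 n).mp (by exact_mod_cast h)
    have := Nat.le_of_dvd one_pos hd
    omega
  have h2 : (2 : ZMod n) ≠ 0 := by
    intro h
    have hd : n ∣ 2 := (ZMod.natCast_eq_zero_iff 2 n).mp (by exact_mod_cast h)
    have := Nat.le_of_dvd two_pos hd
    omega
  have hG : ∀ x y : ZMod n,
      ((y = x + 1 ∧ x ∉ T) ∨ (x - 1 ∈ T ∧ y = r (x - 1) + 1) ∨ (x ∈ T ∧ y = b x)) →
      G.Adj x y := by
    intro x y h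
    rcases h with ⟨hy, -⟩ | ⟨hT, hy⟩ | ⟨hT, hy⟩
    · subst hy; exact hH x
    · subst hy
      have := (auxRed_adj.mp (hr _ hT).2.2).1
      rwa [sub_add_cancel] at this
    · subst hy
      exact (auxBlue_adj.mp (hb _ hT).2.2).1
  constructor
  · intro x y hxy
    rcases (FSgraph_adj.mp hxy).2 with h | h
    · exact hG x y h
    · exact (hG y x h).symm
  · intro x
    set a : ZMod n := if x ∈ T then b x else x + 1 with ha
    set c : ZMod n := if x - 1 ∈ T then r (x - 1) + 1 else x - 1 with hc
    -- x ≠ a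
    have hxa : x ≠ a := by
      by_cases hx : x ∈ T
      · rw [ha, if_pos hx]
        exact (auxBlue_adj.mp (hb _ hx).2.2).1.ne
      · rw [ha, if_neg hx]
        intro h
        exact h1 (add_eq_left.mp h.symm)
    -- x ≠ c
    have hxc : x ≠ c := by
      by_cases hx1 : x - 1 ∈ T
      · rw [hc, if_pos hx1]
        have := (auxRed_adj.mp (hr _ hx1).2.2).1
        rw [sub_add_cancel] at this
        exact this.ne
      · rw [hc, if_neg hx1]
        intro h
        exact h1 (sub_eq_self.mp h.symm)
    -- a ≠ c
    have hac : a ≠ c := by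
      by_cases hx : x ∈ T
      · have hx1 : x - 1 ∉ T := by
          intro h
          have := hnb _ h
          rw [sub_add_cancel] at this
          exact this hx
        rw [ha, if_pos hx, hc, if_neg hx1]
        intro h
        have hb2 := (auxBlue_adj.mp (hb _ hx).2.2).2.2
        apply hb2
        rw [h, sub_add_cancel]
      · by_cases hx1 : x - 1 ∈ T
        · rw [ha, if_neg hx, hc, if_pos hx1]
          intro h
          have hr2 := (auxRed_adj.mp (hr _ hx1).2.2).2.1
          apply hr2
          rw [sub_add_cancel]
          exact (add_right_cancel h).symm
        · rw [ha, if_neg hx, hc, if_neg hx1]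
          intro h
          exact h2 (by linear_combination h)
    -- adjacency to a
    have hAa : (FSgraph n T r b).Adj x a := by
      rw [FSgraph_adj]
      refine ⟨hxa, Or.inl ?_⟩
      by_cases hx : x ∈ T
      · exact Or.inr (Or.inr ⟨hx, by rw [ha, if_pos hx]⟩)
      · exact Or.inl ⟨by rw [ha, if_neg hx], hx⟩
    -- adjacency to c
    have hAc : (FSgraph n T r b).Adj x c := by
      rw [FSgraph_adj]
      by_cases hx1 : x - 1 ∈ T
      · exact ⟨hxc, Or.inl (Or.inr (Or.inl ⟨hx1, by rw [hc, if_pos hx1]⟩))⟩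
      · refine ⟨hxc, Or.inr (Or.inl ⟨?_, ?_⟩)⟩
        · rw [hc, if_neg hx1, sub_add_cancel]
        · rw [hc, if_neg hx1]; exact hx1
    have key : {y | (FSgraph n T r b).Adj x y} = {a, c} := by
      ext y
      simp only [Set.mem_setOf_eq, Set.mem_insert_iff, Set.mem_singleton_iff]
      constructor
      · intro hy
        rcases (FSgraph_adj.mp hy).2 with h | h
        · rcases h with ⟨hy', hxT⟩ | ⟨hT, hy'⟩ | ⟨hT, hy'⟩
          · left; rw [ha, if_neg hxT, hy']
          · right; rw [hc, if_pos hT, hy']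
          · left; rw [ha, if_pos hT, hy']
        · rcases h with ⟨hx', hyT⟩ | ⟨hT, hx'⟩ | ⟨hT, hx'⟩
          · have hy' : y = x - 1 := by rw [hx']; ring
            right; rw [hc, if_neg (hy' ▸ hyT), hy']
          · have hx1' : x - 1 = r (y - 1) := by rw [hx']; ring
            have hmem : x - 1 ∈ T := hx1' ▸ (hr _ hT).1
            have hry : r (x - 1) = y - 1 := by rw [hx1', (hr _ hT).2.1]
            right; rw [hc, if_pos hmem, hry, sub_add_cancel]
          · have hxT : x ∈ T := hx' ▸ (hb _ hT).1
            have hbx : b x = y := by rw [hx', (hb _ hT).2.1]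
            left; rw [ha, if_pos hxT, hbx]
      · rintro (rfl | rfl)
        · exact hAa
        · exact hAc
    rw [key, Set.ncard_pair hac]
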